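/- Let f_1, …, f_r be pairwise non-proportional nonzero linear forms in ℂ[x_1, …, x_n]. If f_1^m, …, f_r^m are linearly dependent over ℂ for some positive integer m, then m ≤ r − 2. -/

import Mathlib

open MvPolynomial


lemma deg_one_single {σ : Type*} (d : σ →₀ ℕ) (h : Finsupp.degree d = 1) :
    ∃ i, d = Finsupp.single i 1 := by
  classical
  have hne : d.support.Nonempty := by
    rw [Finsupp.support_nonempty_iff]
    rintro rfl
    simp [Finsupp.degree] at h
  obtain ⟨i, hi⟩ := hne
  have hdi : 1 ≤ d i := Nat.one_le_iff_ne_zero.mpr (Finsupp.mem_support_iff.mp hi)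
  have hle : d i ≤ Finsupp.degree d := Finset.single_le_sum (fun _ _ => Nat.zero_le _) hi
  refine ⟨i, Finsupp.eq_single_iff.mpr ⟨?_, ?_⟩⟩
  · intro j hj
    simp only [Finset.mem_singleton]
    by_contra hji
    have hdj : 1 ≤ d j := Nat.one_le_iff_ne_zero.mpr (Finsupp.mem_support_iff.mp hj)
    have hpair : ({i, j} : Finset σ) ⊆ d.support := by
      intro x hx
      rcases Finset.mem_insert.mp hx with rfl | hx
      · exact hi
      · exact Finset.mem_singleton.mp hx ▸ hj
    have : d i + d j ≤ Finsupp.degree d := by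
      calc d i + d j = ∑ x ∈ ({i, j} : Finset σ), d x := by
            rw [Finset.sum_insert (by simpa using Ne.symm hji), Finset.sum_singleton]
        _ ≤ _ := Finset.sum_le_sum_of_subset hpair
    omega
  · omega

lemma rep_lemma {n : ℕ} (p : MvPolynomial (Fin n) ℂ) (hp : p.IsHomogeneous 1) :
    p = ∑ i, C (coeff (Finsupp.single i 1) p) * X i := by
  apply MvPolynomial.ext
  intro d
  rw [coeff_sum]
  simp only [coeff_C_mul, coeff_X', mul_ite, mul_one, mul_zero]
  by_cases hd : ∃ i, d = Finsupp.single i 1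
  · obtain ⟨i, rfl⟩ := hd
    rw [Finset.sum_eq_single i]
    · simp
    · intro j _ hji
      rw [if_neg]
      intro hc
      exact hji (by simpa using (Finsupp.single_left_injective one_ne_zero) hc)
    · simp
  · rw [Finset.sum_eq_zero, eq_comm]
    · by_contra hc
      have := hp (Ne.symm hc)
      replace this : Finsupp.degree d = 1 := by rw [Finsupp.degree_eq_weight_one]; exact this
      exact hd (deg_one_single d this)
    · intro j _
      rw [if_neg]
      intro hc
      exact hd ⟨j, hc.symm⟩

section
variable {r n : ℕ}

private noncomputable def Lu (a : Fin n → ℂ) : MvPolynomial (Fin n ⊕ Fin n) ℂ :=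
  ∑ s, C (a s) * X (Sum.inl s)

private noncomputable def Lz (a : Fin n → ℂ) : MvPolynomial (Fin n ⊕ Fin n) ℂ :=
  ∑ s, C (a s) * X (Sum.inr s)

private lemma eval_Lu (w : Fin n ⊕ Fin n → ℂ) (a : Fin n → ℂ) :
    eval w (Lu a) = ∑ s, a s * w (Sum.inl s) := by
  simp [Lu]

private lemma eval_Lz (w : Fin n ⊕ Fin n → ℂ) (a : Fin n → ℂ) :
    eval w (Lz a) = ∑ s, a s * w (Sum.inr s) := by
  simp [Lz]

private lemma Lu_ne_zero {a : Fin n → ℂ} (h : ∃ s, a s ≠ 0) : Lu a ≠ 0 := by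
  classical
  obtain ⟨s, hs⟩ := h
  intro h0
  apply hs
  have := congrArg (eval (Sum.elim (fun s' => if s' = s then (1:ℂ) else 0) 0)) h0
  rw [eval_Lu] at this
  simpa using this

private lemma Q_ne_zero {a b : Fin n → ℂ} (h : ∃ s t, a s * b t - b s * a t ≠ 0) :
    Lu a * Lz b - Lu b * Lz a ≠ 0 := by
  classical
  obtain ⟨s, t, hst⟩ := h
  intro h0
  apply hst
  have := congrArg (eval (Sum.elim (fun s' => if s' = s then (1:ℂ) else 0)
    (fun t' => if t' = t then (1:ℂ) else 0))) h0
  rw [map_sub, map_mul, map_mul, eval_Lu, eval_Lu, eval_Lz, eval_Lz] at this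
  simpa using this

lemma exists_good_point (v : Fin r → Fin n → ℂ)
    (h0 : ∀ j, ∃ s, v j s ≠ 0)
    (hmi : ∀ i j : Fin r, i ≠ j → ∃ s t, v i s * v j t - v j s * v i t ≠ 0) :
    ∃ u z : Fin n → ℂ, (∀ j, (∑ s, v j s * u s) ≠ 0) ∧
      ∀ i j : Fin r, i ≠ j →
        (∑ s, v i s * u s) * (∑ s, v j s * z s)
          - (∑ s, v j s * u s) * (∑ s, v i s * z s) ≠ 0 := by
  classical
  set P : MvPolynomial (Fin n ⊕ Fin n) ℂ :=
    (∏ j, Lu (v j)) * ∏ p ∈ Finset.univ.offDiag,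
      (Lu (v p.1) * Lz (v p.2) - Lu (v p.2) * Lz (v p.1)) with hP
  have hPne : P ≠ 0 := by
    apply mul_ne_zero
    · rw [Finset.prod_ne_zero_iff]
      exact fun j _ => Lu_ne_zero (h0 j)
    · rw [Finset.prod_ne_zero_iff]
      intro p hp
      exact Q_ne_zero (hmi p.1 p.2 (Finset.mem_offDiag.mp hp).2.2)
  have hw : ∃ w : Fin n ⊕ Fin n → ℂ, eval w P ≠ 0 := by
    by_contra hall
    push_neg at hall
    exact hPne (MvPolynomial.funext (fun x => by simpa using hall x))
  obtain ⟨w, hw⟩ := hw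
  refine ⟨fun s => w (Sum.inl s), fun s => w (Sum.inr s), ?_, ?_⟩
  · intro j
    rw [hP, map_mul, map_prod] at hw
    have h1 := (mul_ne_zero_iff.mp hw).1
    rw [Finset.prod_ne_zero_iff] at h1
    have := h1 j (Finset.mem_univ j)
    rwa [eval_Lu] at this
  · intro i j hij
    rw [hP, map_mul, map_prod] at hw
    have h2 := (mul_ne_zero_iff.mp hw).2
    rw [map_prod, Finset.prod_ne_zero_iff] at h2
    have := h2 (i, j) (Finset.mem_offDiag.mpr ⟨Finset.mem_univ _, Finset.mem_univ _, hij⟩)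
    rwa [map_sub, map_mul, map_mul, eval_Lu, eval_Lu, eval_Lz, eval_Lz] at this
end

lemma coeff_linear_pow (a b : ℂ) (m k : ℕ) (hk : k ≤ m) :
    ((Polynomial.C a + Polynomial.C b * Polynomial.X) ^ m).coeff k
      = a ^ (m - k) * b ^ k * m.choose k := by
  rw [add_pow, Polynomial.finset_sum_coeff]
  have hterm : ∀ κ ∈ Finset.range (m + 1),
      ((Polynomial.C a) ^ κ * (Polynomial.C b * Polynomial.X) ^ (m - κ)
          * (m.choose κ : Polynomial ℂ)).coeff k
        = if k = m - κ then a ^ κ * b ^ (m - κ) * m.choose κ else 0 := by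
    intro κ _
    have heq : (Polynomial.C a) ^ κ * (Polynomial.C b * Polynomial.X) ^ (m - κ)
          * (m.choose κ : Polynomial ℂ)
        = Polynomial.C (a ^ κ * b ^ (m - κ) * (m.choose κ : ℂ)) * Polynomial.X ^ (m - κ) := by
      rw [← Polynomial.C_eq_natCast]
      simp only [mul_pow, ← Polynomial.C_pow, Polynomial.C_mul]
      ring
    rw [heq, Polynomial.coeff_C_mul, Polynomial.coeff_X_pow, mul_ite, mul_one, mul_zero]
  rw [Finset.sum_congr rfl hterm, Finset.sum_eq_single (m - k)]
  · rw [if_pos (by omega)]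
    congr 1
    · congr 2
      omega
    · rw [Nat.choose_symm hk]
  · intro κ hκ hne
    rw [Finset.mem_range] at hκ
    rw [if_neg]
    intro h
    exact hne (by omega)
  · intro h
    exact absurd (Finset.mem_range.mpr (by omega)) h

theorem stmt6 (r n m : ℕ) (hm : 0 < m) (f : Fin r → MvPolynomial (Fin n) ℂ)
    (hne : ∀ j, f j ≠ 0)
    (hhom : ∀ j, (f j).IsHomogeneous 1)
    (hprop : ∀ i j, i ≠ j → ∀ c : ℂ, f i ≠ c • f j)
    (hdep : ¬ LinearIndependent ℂ (fun j => f j ^ m)) :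
    m ≤ r - 2 := by
  classical
  by_contra hcon
  have hr : r ≤ m + 1 := by omega
  set v : Fin r → Fin n → ℂ := fun j i => coeff (Finsupp.single i 1) (f j) with hv
  have hrep : ∀ j, f j = ∑ i, C (v j i) * X i := fun j => rep_lemma (f j) (hhom j)
  have h0 : ∀ j, ∃ s, v j s ≠ 0 := by
    intro j
    by_contra hc
    push_neg at hc
    apply hne j
    rw [hrep j]
    simp [hc]
  have hmi : ∀ i j : Fin r, i ≠ j → ∃ s t, v i s * v j t - v j s * v i t ≠ 0 := by
    intro i j hij
    by_contra hc
    push_neg at hc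
    obtain ⟨t0, ht0⟩ := h0 j
    apply hprop i j hij (v i t0 / v j t0)
    rw [hrep i, hrep j, Finset.smul_sum]
    apply Finset.sum_congr rfl
    intro s _
    have hms := hc s t0
    have hvs : v i s = v i t0 / v j t0 * v j s := by
      field_simp
      linear_combination hms
    rw [hvs, smul_eq_C_mul, ← mul_assoc, ← C_mul]
  obtain ⟨u, z, hα, hminor⟩ := exists_good_point v h0 hmi
  set α : Fin r → ℂ := fun j => ∑ s, v j s * u s with hαdef
  set β : Fin r → ℂ := fun j => ∑ s, v j s * z s with hβdef
  rw [Fintype.not_linearIndependent_iff] at hdep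
  obtain ⟨g, hrel, i0, hg0⟩ := hdep
  have hevalf : ∀ j (w : Fin n → ℂ), eval w (f j) = ∑ s, v j s * w s := by
    intro j w
    conv_lhs => rw [hrep j]
    simp
  have key : ∀ t : ℂ, ∑ j, g j * (α j + β j * t) ^ m = 0 := by
    intro t
    have h1 := congrArg (eval (fun s => u s + t * z s)) hrel
    rw [map_sum, map_zero] at h1
    rw [← h1]
    apply Finset.sum_congr rfl
    intro j _
    rw [smul_eval, map_pow, hevalf]
    have hsum : (∑ s, v j s * (u s + t * z s)) = α j + β j * t := by
      simp only [mul_add, Finset.sum_add_distrib]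
      congr 1
      rw [hβdef, Finset.sum_mul]
      exact Finset.sum_congr rfl fun s _ => by ring
    rw [hsum]
  set RP : Polynomial ℂ :=
    ∑ j, Polynomial.C (g j) * (Polynomial.C (α j) + Polynomial.C (β j) * Polynomial.X) ^ m
    with hRP
  have hRP0 : RP = 0 := by
    apply Polynomial.funext
    intro t
    rw [hRP]
    simp only [Polynomial.eval_finset_sum, Polynomial.eval_mul, Polynomial.eval_pow,
      Polynomial.eval_add, Polynomial.eval_C, Polynomial.eval_mul, Polynomial.eval_X,
      Polynomial.eval_zero]
    exact key t
  have hcoeff : ∀ k : ℕ, k ≤ m → ∑ j, g j * (α j ^ (m - k) * β j ^ k) = 0 := by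
    intro k hk
    have h1 : Polynomial.coeff RP k = 0 := by rw [hRP0]; simp
    rw [hRP, Polynomial.finset_sum_coeff] at h1
    simp only [Polynomial.coeff_C_mul, coeff_linear_pow _ _ m k hk] at h1
    have h2 : (∑ j, g j * (α j ^ (m - k) * β j ^ k)) * (m.choose k : ℂ) = 0 := by
      rw [Finset.sum_mul, ← h1]
      apply Finset.sum_congr rfl
      intro j _
      ring
    rcases mul_eq_zero.mp h2 with h | h
    · exact h
    · exact absurd h (Nat.cast_ne_zero.mpr (Nat.choose_pos hk).ne')
  set γ : Fin r → ℂ := fun j => β j / α j with hγdef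
  have hγinj : Function.Injective γ := by
    intro i j hijγ
    by_contra hij
    apply hminor i j hij
    have := (div_eq_div_iff (hα i) (hα j)).mp hijγ
    linear_combination -this
  have hδ : ∀ k : Fin r, ∑ j, (g j * α j ^ m) * γ j ^ (k : ℕ) = 0 := by
    intro k
    have hk : (k : ℕ) ≤ m := by omega
    have h1 := hcoeff k hk
    rw [← h1]
    apply Finset.sum_congr rfl
    intro j _
    have hαm : α j ^ m = α j ^ (m - (k : ℕ)) * α j ^ (k : ℕ) := by
      rw [← pow_add]
      congr 1
      omega
    have hβγ : β j = α j * γ j := by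
      rw [hγdef]
      field_simp
      rw [eq_div_iff (show α j ≠ 0 from hα j)]
    rw [hβγ, mul_pow, hαm]
    ring
  have hd0 := Matrix.eq_zero_of_forall_pow_sum_mul_pow_eq_zero hγinj hδ
  have := congrFun hd0 i0
  simp only [Pi.zero_apply, mul_eq_zero] at this
  rcases this with h | h
  · exact hg0 h
  · exact pow_ne_zero m (hα i0) h
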